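/- arXiv:2108.03844 — 3 statements merged into one kernel-verified Lean document; each statement's English description precedes it below -/
import Mathlib

section
/- Assume in addition that every element of X is essentially bounded. Then for each η > 0 there exists a constant C, depending only on X and η, such that for all ρ₁, ρ₂ ∈ L^∞(D, μ) with ρ₁ ≥ η and ρ₂ ≥ η almost everywhere, ‖M[ρ₁]^{-1} − M[ρ₂]^{-1}‖_{L(X,X)} ≤ C ‖ρ₁ − ρ₂‖_{L¹(D,μ)}. -/
set_option maxHeartbeats 2000000
set_option synthInstance.maxHeartbeats 1000000

open MeasureTheory
open scoped RealInnerProductSpace ENNReal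

private abbrev E3 := EuclideanSpace ℝ (Fin 3)

lemma aux_ae_bound {D F : Type*} [MeasurableSpace D] [NormedAddCommGroup F] {μ : Measure D}
    {f : D → F} (hf : MemLp f ⊤ μ) :
    ∀ᵐ x ∂μ, ‖f x‖ ≤ (eLpNorm f ⊤ μ).toReal := by
  filter_upwards [ae_le_eLpNormEssSup (f := f) (μ := μ)] with x hx
  rw [eLpNorm_exponent_top]
  have hfin : eLpNormEssSup f μ ≠ ⊤ := by
    rw [← eLpNorm_exponent_top]; exact hf.2.ne
  calc ‖f x‖ = ((‖f x‖₊ : ℝ≥0∞)).toReal := by simp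
    _ ≤ (eLpNormEssSup f μ).toReal := ENNReal.toReal_mono hfin hx


noncomputable def auxInclL {D : Type*} [MeasurableSpace D] (μ : Measure D)
    (X : Submodule ℝ (Lp E3 2 μ)) [FiniteDimensional ℝ X]
    (hX_bdd : ∀ v : X, MemLp (((v : X) : Lp E3 2 μ) : D → E3) ⊤ μ) :
    X →ₗ[ℝ] Lp E3 ⊤ μ :=
    { toFun := fun v => (hX_bdd v).toLp _
      map_add' := fun v w => by
        rw [← MemLp.toLp_add (hX_bdd v) (hX_bdd w)]
        refine MemLp.toLp_congr _ _ ?_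
        rw [Submodule.coe_add]
        exact Lp.coeFn_add _ _
      map_smul' := fun c v => by
        rw [RingHom.id_apply]
        show (hX_bdd (c • v)).toLp _ = c • (hX_bdd v).toLp _
        have h1 : (hX_bdd (c • v)).toLp _ = ((hX_bdd v).const_smul c).toLp _ :=
          MemLp.toLp_congr _ _ (by rw [Submodule.coe_smul]; exact Lp.coeFn_smul _ _)
        rw [h1, MemLp.toLp_const_smul] }

noncomputable def auxIncl {D : Type*} [MeasurableSpace D] (μ : Measure D)
    (X : Submodule ℝ (Lp E3 2 μ)) [FiniteDimensional ℝ X]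
    (hX_bdd : ∀ v : X, MemLp (((v : X) : Lp E3 2 μ) : D → E3) ⊤ μ) :
    X →L[ℝ] Lp E3 ⊤ μ :=
  (auxInclL μ X hX_bdd).toContinuousLinearMap

lemma auxIncl_apply {D : Type*} [MeasurableSpace D] (μ : Measure D)
    (X : Submodule ℝ (Lp E3 2 μ)) [FiniteDimensional ℝ X]
    (hX_bdd : ∀ v : X, MemLp (((v : X) : Lp E3 2 μ) : D → E3) ⊤ μ) (v : X) :
    auxIncl μ X hX_bdd v = (hX_bdd v).toLp _ := rfl

lemma aux_unif_bound {D : Type*} [MeasurableSpace D] (μ : Measure D)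
    (X : Submodule ℝ (Lp E3 2 μ)) [FiniteDimensional ℝ X]
    (hX_bdd : ∀ v : X, MemLp (((v : X) : Lp E3 2 μ) : D → E3) ⊤ μ) :
    ∃ K : ℝ, 0 ≤ K ∧ ∀ v : X, ∀ᵐ x ∂μ, ‖((v : X) : Lp E3 2 μ) x‖ ≤ K * ‖v‖ := by
  have hKnn : (0 : ℝ) ≤ ‖auxIncl μ X hX_bdd‖ := norm_nonneg (auxIncl μ X hX_bdd)
  refine ⟨_, hKnn, fun v => ?_⟩
  have h2 : (eLpNorm (((v : X) : Lp E3 2 μ) : D → E3) ⊤ μ).toReal = ‖auxIncl μ X hX_bdd v‖ := by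
    rw [auxIncl_apply, Lp.norm_def]
    congr 1
    exact eLpNorm_congr_ae (MemLp.coeFn_toLp _).symm
  filter_upwards [aux_ae_bound (hX_bdd v)] with x hx
  exact hx.trans (h2 ▸ (auxIncl μ X hX_bdd).le_opNorm v)

/-- Let `X` be a finite-dimensional subspace of `L²(D, μ; ℝ³)` whose elements
are all essentially bounded. Then for each `η > 0` there is a constant `C` (depending only on
`X` and `η`) such that for all `ρ₁, ρ₂ ∈ L^∞` with `ρ₁, ρ₂ ≥ η` a.e.,
`‖M[ρ₁]⁻¹ − M[ρ₂]⁻¹‖_{L(X,X)} ≤ C ‖ρ₁ − ρ₂‖_{L¹(D,μ)}`, where `M[ρ] : X → X` is determined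
by `⟪M[ρ]v, w⟫_{L²} = ∫ ρ (v·w) dμ`. -/
theorem stmt_3 {D : Type*} [MeasurableSpace D] (μ : Measure D) [IsFiniteMeasure μ]
    (X : Submodule ℝ (Lp (EuclideanSpace ℝ (Fin 3)) 2 μ)) [FiniteDimensional ℝ X]
    (hX_bdd : ∀ v : X, MemLp (((v : X) : Lp (EuclideanSpace ℝ (Fin 3)) 2 μ) : D → EuclideanSpace ℝ (Fin 3)) ⊤ μ)
    (η : ℝ) (hη : 0 < η) :
    ∃ C : ℝ, ∀ ρ₁ ρ₂ : D → ℝ,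
      Measurable ρ₁ → Measurable ρ₂ → MemLp ρ₁ ⊤ μ → MemLp ρ₂ ⊤ μ →
      (∀ᵐ x ∂μ, η ≤ ρ₁ x) → (∀ᵐ x ∂μ, η ≤ ρ₂ x) →
      ∀ M₁ M₂ : X ≃L[ℝ] X,
        (∀ v w : X,
          ⟪((M₁ v : X) : Lp (EuclideanSpace ℝ (Fin 3)) 2 μ),
              ((w : X) : Lp (EuclideanSpace ℝ (Fin 3)) 2 μ)⟫
            = ∫ x, ρ₁ x * ⟪((v : X) : Lp (EuclideanSpace ℝ (Fin 3)) 2 μ) x,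
                ((w : X) : Lp (EuclideanSpace ℝ (Fin 3)) 2 μ) x⟫ ∂μ) →
        (∀ v w : X,
          ⟪((M₂ v : X) : Lp (EuclideanSpace ℝ (Fin 3)) 2 μ),
              ((w : X) : Lp (EuclideanSpace ℝ (Fin 3)) 2 μ)⟫
            = ∫ x, ρ₂ x * ⟪((v : X) : Lp (EuclideanSpace ℝ (Fin 3)) 2 μ) x,
                ((w : X) : Lp (EuclideanSpace ℝ (Fin 3)) 2 μ) x⟫ ∂μ) →
        ‖(M₁.symm : X →L[ℝ] X) - (M₂.symm : X →L[ℝ] X)‖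
          ≤ C * ∫ x, |ρ₁ x - ρ₂ x| ∂μ := by
  classical
  obtain ⟨K, hK0, hbd⟩ := aux_unif_bound μ X hX_bdd
  refine ⟨η⁻¹ * η⁻¹ * (K * K), ?_⟩
  intro ρ₁ ρ₂ hm₁ hm₂ hl₁ hl₂ hge₁ hge₂ M₁ M₂ h₁ h₂
  set I := ∫ x, |ρ₁ x - ρ₂ x| ∂μ with hIdef
  have hI0 : 0 ≤ I := integral_nonneg fun x => abs_nonneg _
  have hinner_int : ∀ v w : X, Integrable
      (fun x => ⟪((v : X) : Lp E3 2 μ) x, ((w : X) : Lp E3 2 μ) x⟫) μ :=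
    fun v w => L2.integrable_inner (𝕜 := ℝ) _ _
  have hmul_int : ∀ (ρ : D → ℝ), Measurable ρ → MemLp ρ ⊤ μ → ∀ v w : X,
      Integrable (fun x => ρ x * ⟪((v : X) : Lp E3 2 μ) x, ((w : X) : Lp E3 2 μ) x⟫) μ := by
    intro ρ hm hl v w
    exact Integrable.bdd_mul (hinner_int v w) hm.aestronglyMeasurable (aux_ae_bound hl)
  have habs_int : Integrable (fun x => |ρ₁ x - ρ₂ x|) μ :=
    (MemLp.integrable le_top (hl₁.sub hl₂)).abs
  -- difference bound: ‖M₁ v - M₂ v‖ ≤ K * K * ‖v‖ * I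
  have hMdiff : ∀ v : X, ‖M₁ v - M₂ v‖ ≤ K * K * ‖v‖ * I := by
    intro v
    set u : X := M₁ v - M₂ v with hu
    have hsub : ⟪((M₁ v : X) : Lp E3 2 μ) - ((M₂ v : X) : Lp E3 2 μ), ((u : X) : Lp E3 2 μ)⟫
        = ∫ x, (ρ₁ x - ρ₂ x) * ⟪((v : X) : Lp E3 2 μ) x, ((u : X) : Lp E3 2 μ) x⟫ ∂μ := by
      rw [inner_sub_left, h₁ v u, h₂ v u,
        ← integral_sub (hmul_int ρ₁ hm₁ hl₁ v u) (hmul_int ρ₂ hm₂ hl₂ v u)]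
      congr 1
      ext x
      ring
    have hcoe : ((u : X) : Lp E3 2 μ) = ((M₁ v : X) : Lp E3 2 μ) - ((M₂ v : X) : Lp E3 2 μ) := by
      rw [hu]; push_cast; ring
    have hnorm_sq : ‖u‖ * ‖u‖ = ⟪((M₁ v : X) : Lp E3 2 μ) - ((M₂ v : X) : Lp E3 2 μ),
        ((u : X) : Lp E3 2 μ)⟫ := by
      rw [← hcoe, real_inner_self_eq_norm_mul_norm]
      rfl
    have hbound : ⟪((M₁ v : X) : Lp E3 2 μ) - ((M₂ v : X) : Lp E3 2 μ), ((u : X) : Lp E3 2 μ)⟫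
        ≤ (K * ‖v‖) * (K * ‖u‖) * I := by
      rw [hsub]
      have := norm_integral_le_of_norm_le (g := fun x =>
          (K * ‖v‖) * (K * ‖u‖) * |ρ₁ x - ρ₂ x|)
        (f := fun x => (ρ₁ x - ρ₂ x) * ⟪((v : X) : Lp E3 2 μ) x, ((u : X) : Lp E3 2 μ) x⟫)
        (habs_int.const_mul _) ?_
      · calc (∫ x, (ρ₁ x - ρ₂ x) * ⟪((v : X) : Lp E3 2 μ) x, ((u : X) : Lp E3 2 μ) x⟫ ∂μ)
            ≤ ‖∫ x, (ρ₁ x - ρ₂ x) * ⟪((v : X) : Lp E3 2 μ) x, ((u : X) : Lp E3 2 μ) x⟫ ∂μ‖ :=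
              le_abs_self _
          _ ≤ ∫ x, (K * ‖v‖) * (K * ‖u‖) * |ρ₁ x - ρ₂ x| ∂μ := this
          _ = (K * ‖v‖) * (K * ‖u‖) * I := by rw [hIdef, integral_const_mul]
      · filter_upwards [hbd v, hbd u] with x hv hu'
        rw [norm_mul, Real.norm_eq_abs (ρ₁ x - ρ₂ x)]
        calc |ρ₁ x - ρ₂ x| * ‖⟪((v : X) : Lp E3 2 μ) x, ((u : X) : Lp E3 2 μ) x⟫‖
            ≤ |ρ₁ x - ρ₂ x| * (‖((v : X) : Lp E3 2 μ) x‖ * ‖((u : X) : Lp E3 2 μ) x‖) := by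
              refine mul_le_mul_of_nonneg_left ?_ (abs_nonneg _)
              rw [Real.norm_eq_abs]
              exact abs_real_inner_le_norm _ _
          _ ≤ |ρ₁ x - ρ₂ x| * ((K * ‖v‖) * (K * ‖u‖)) := by
              refine mul_le_mul_of_nonneg_left ?_ (abs_nonneg _)
              exact mul_le_mul hv hu' (norm_nonneg _) (by positivity)
          _ = (K * ‖v‖) * (K * ‖u‖) * |ρ₁ x - ρ₂ x| := by ring
    rcases eq_or_lt_of_le (norm_nonneg u) with h0 | h0
    · rw [← h0]; positivity
    · have := hnorm_sq ▸ hbound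
      have h' : ‖u‖ * ‖u‖ ≤ (K * K * ‖v‖ * I) * ‖u‖ := by nlinarith
      exact le_of_mul_le_mul_right h' h0
  -- coercivity bound for the inverses
  have hinv : ∀ (ρ : D → ℝ), Measurable ρ → MemLp ρ ⊤ μ → (∀ᵐ x ∂μ, η ≤ ρ x) →
      ∀ (M : X ≃L[ℝ] X),
      (∀ v w : X, ⟪((M v : X) : Lp E3 2 μ), ((w : X) : Lp E3 2 μ)⟫
        = ∫ x, ρ x * ⟪((v : X) : Lp E3 2 μ) x, ((w : X) : Lp E3 2 μ) x⟫ ∂μ) →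
      ∀ u : X, ‖M.symm u‖ ≤ η⁻¹ * ‖u‖ := by
    intro ρ hm hl hge M hM u
    set v : X := M.symm u with hv
    have hMv : M v = u := M.apply_symm_apply u
    have hlow : η * (‖v‖ * ‖v‖) ≤ ⟪((M v : X) : Lp E3 2 μ), ((v : X) : Lp E3 2 μ)⟫ := by
      rw [hM v v]
      have hle : ∫ x, η * ⟪((v : X) : Lp E3 2 μ) x, ((v : X) : Lp E3 2 μ) x⟫ ∂μ
          ≤ ∫ x, ρ x * ⟪((v : X) : Lp E3 2 μ) x, ((v : X) : Lp E3 2 μ) x⟫ ∂μ := by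
        refine integral_mono_ae ((hinner_int v v).const_mul η) (hmul_int ρ hm hl v v) ?_
        filter_upwards [hge] with x hx
        exact mul_le_mul_of_nonneg_right hx real_inner_self_nonneg
      refine le_trans ?_ hle
      rw [integral_const_mul]
      refine mul_le_mul_of_nonneg_left ?_ hη.le
      rw [← L2.inner_def, real_inner_self_eq_norm_mul_norm]
      exact le_of_eq rfl
    have hupp : ⟪((M v : X) : Lp E3 2 μ), ((v : X) : Lp E3 2 μ)⟫ ≤ ‖u‖ * ‖v‖ := by
      refine (real_inner_le_norm _ _).trans ?_
      rw [hMv]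
      exact le_of_eq rfl
    rcases eq_or_lt_of_le (norm_nonneg v) with h0 | h0
    · rw [← h0]; positivity
    · have h' : ‖v‖ * ‖v‖ ≤ (η⁻¹ * ‖u‖) * ‖v‖ := by
        rw [mul_comm ‖u‖ ‖v‖] at hupp
        have := hlow.trans hupp
        rw [inv_mul_eq_div, div_mul_eq_mul_div, le_div_iff₀ hη]
        nlinarith
      exact le_of_mul_le_mul_right h' h0
  -- assemble
  refine ContinuousLinearMap.opNorm_le_bound _ (by positivity) fun u => ?_
  have happ : ((M₁.symm : X →L[ℝ] X) - (M₂.symm : X →L[ℝ] X)) u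
      = M₁.symm (M₂ (M₂.symm u) - M₁ (M₂.symm u)) := by
    rw [map_sub, M₂.apply_symm_apply, M₁.symm_apply_apply]
    simp [ContinuousLinearMap.sub_apply]
  rw [happ]
  calc ‖M₁.symm (M₂ (M₂.symm u) - M₁ (M₂.symm u))‖
      ≤ η⁻¹ * ‖M₂ (M₂.symm u) - M₁ (M₂.symm u)‖ :=
        hinv ρ₁ hm₁ hl₁ hge₁ M₁ h₁ _
    _ = η⁻¹ * ‖M₁ (M₂.symm u) - M₂ (M₂.symm u)‖ := by rw [norm_sub_rev]
    _ ≤ η⁻¹ * (K * K * ‖M₂.symm u‖ * I) := by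
        refine mul_le_mul_of_nonneg_left (hMdiff _) (by positivity)
    _ ≤ η⁻¹ * (K * K * (η⁻¹ * ‖u‖) * I) := by
        have := hinv ρ₂ hm₂ hl₂ hge₂ M₂ h₂ u
        have hKKI : 0 ≤ K * K * I := by positivity
        have h1 : K * K * ‖M₂.symm u‖ * I ≤ K * K * (η⁻¹ * ‖u‖) * I := by nlinarith
        exact mul_le_mul_of_nonneg_left h1 (by positivity)
    _ = η⁻¹ * η⁻¹ * (K * K) * I * ‖u‖ := by ring
end

section
/- Assume in addition that every element of X is essentially bounded. Then there exists a constant C, depending only on X, such that for every η > 0 and all ρ₁, ρ₂ ∈ L^∞(D, μ) with ρ₁ ≥ η and ρ₂ ≥ η almost everywhere, the square-root-weighted operators satisfy ‖M[√ρ₁] − M[√ρ₂]‖_{L(X,X)} ≤ (C / (2√η)) ‖ρ₁ − ρ₂‖_{L²(D,μ)}, where M[√ρ] : X → X is defined by ⟨M[√ρ]v, w⟩_{L²} = ∫_D √ρ (v·w) dμ for all v, w ∈ X. -/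
open MeasureTheory
open scoped RealInnerProductSpace ENNReal

local notation "E" => EuclideanSpace ℝ (Fin 3)

set_option maxHeartbeats 1000000
set_option synthInstance.maxHeartbeats 1000000

private lemma sqrt_diff_le {η a b : ℝ} (hη : 0 < η) (ha : η ≤ a) (hb : η ≤ b) :
    |Real.sqrt a - Real.sqrt b| ≤ |a - b| / (2 * Real.sqrt η) := by
  have ha0 : (0:ℝ) ≤ a := hη.le.trans ha
  have hb0 : (0:ℝ) ≤ b := hη.le.trans hb
  have hsa : Real.sqrt η ≤ Real.sqrt a := Real.sqrt_le_sqrt ha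
  have hsb : Real.sqrt η ≤ Real.sqrt b := Real.sqrt_le_sqrt hb
  have hsη : 0 < Real.sqrt η := Real.sqrt_pos.mpr hη
  have hden : (0:ℝ) < 2 * Real.sqrt η := by positivity
  rw [le_div_iff₀ hden]
  have h1 : |Real.sqrt a - Real.sqrt b| * (2 * Real.sqrt η)
      ≤ |Real.sqrt a - Real.sqrt b| * (Real.sqrt a + Real.sqrt b) :=
    mul_le_mul_of_nonneg_left (by linarith) (abs_nonneg _)
  have h2 : |Real.sqrt a - Real.sqrt b| * (Real.sqrt a + Real.sqrt b) = |a - b| := by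
    rw [← abs_of_nonneg (show (0:ℝ) ≤ Real.sqrt a + Real.sqrt b by positivity), ← abs_mul]
    congr 1
    nlinarith [Real.sq_sqrt ha0, Real.sq_sqrt hb0]
  linarith

private noncomputable def sqrtT {D : Type*} [MeasurableSpace D] (μ : Measure D) [IsFiniteMeasure μ]
    (X : Submodule ℝ (Lp (EuclideanSpace ℝ (Fin 3)) 2 μ))
    (hX_bdd : ∀ v : X, MemLp (((v : X) : Lp (EuclideanSpace ℝ (Fin 3)) 2 μ) : D → EuclideanSpace ℝ (Fin 3)) ⊤ μ) :
    X →ₗ[ℝ] Lp E ⊤ μ :=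
    { toFun := fun v => (hX_bdd v).toLp _
      map_add' := fun v w => by
        have h : (hX_bdd (v + w)).toLp _
            = ((hX_bdd v).add (hX_bdd w)).toLp
                ((((v : X) : Lp E 2 μ) : D → E) + (((w : X) : Lp E 2 μ) : D → E)) := by
          rw [MemLp.toLp_eq_toLp_iff]
          have h0 : ((((v + w : X) : X) : Lp E 2 μ)) = ((v : X) : Lp E 2 μ) + ((w : X) : Lp E 2 μ) := rfl
          rw [h0]
          exact Lp.coeFn_add _ _
        rw [h, MemLp.toLp_add]
      map_smul' := fun c v => by
        have h : (hX_bdd (c • v)).toLp _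
            = ((hX_bdd v).const_smul c).toLp (c • (((v : X) : Lp E 2 μ) : D → E)) := by
          rw [MemLp.toLp_eq_toLp_iff]
          have h0 : ((((c • v : X) : X) : Lp E 2 μ)) = c • ((v : X) : Lp E 2 μ) := rfl
          rw [h0]
          exact Lp.coeFn_smul _ _
        rw [h]
        exact MemLp.toLp_const_smul c (hX_bdd v) }

private lemma exists_unif_bound {D : Type*} [MeasurableSpace D] (μ : Measure D) [IsFiniteMeasure μ]
    (X : Submodule ℝ (Lp (EuclideanSpace ℝ (Fin 3)) 2 μ)) [FiniteDimensional ℝ X]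
    (hX_bdd : ∀ v : X, MemLp (((v : X) : Lp (EuclideanSpace ℝ (Fin 3)) 2 μ) : D → EuclideanSpace ℝ (Fin 3)) ⊤ μ) :
    ∃ C : ℝ, 0 ≤ C ∧ ∀ v : X, ∀ᵐ x ∂μ,
      ‖((v : X) : Lp (EuclideanSpace ℝ (Fin 3)) 2 μ) x‖ ≤ C * ‖v‖ := by
  haveI : Fact ((1:ℝ≥0∞) ≤ ⊤) := ⟨le_top⟩
  have hcont : Continuous (sqrtT μ X hX_bdd) :=
    (sqrtT μ X hX_bdd).continuous_of_finiteDimensional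
  obtain ⟨C, hCpos, hCb⟩ := SemilinearMapClass.bound_of_continuous (sqrtT μ X hX_bdd) hcont
  refine ⟨C, hCpos.le, fun v => ?_⟩
  have h3 : ‖sqrtT μ X hX_bdd v‖ = (eLpNorm (((v : X) : Lp E 2 μ) : D → E) ⊤ μ).toReal := by
    have h : sqrtT μ X hX_bdd v = (hX_bdd v).toLp _ := rfl
    rw [h, Lp.norm_toLp]
  have hfin : eLpNormEssSup (((v : X) : Lp E 2 μ) : D → E) μ ≠ ⊤ := by
    have := (hX_bdd v).2
    rwa [eLpNorm_exponent_top, lt_top_iff_ne_top] at this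
  have h2 := ae_le_eLpNormEssSup (f := (((v : X) : Lp E 2 μ) : D → E)) (μ := μ)
  filter_upwards [h2] with x hx
  have h4 : ‖((v : X) : Lp E 2 μ) x‖ ≤ (eLpNormEssSup (((v : X) : Lp E 2 μ) : D → E) μ).toReal := by
    have := ENNReal.toReal_mono hfin hx
    simpa using this
  refine h4.trans ?_
  rw [← eLpNorm_exponent_top, ← h3]
  exact hCb v

/-- Let `X` be a finite-dimensional subspace of `L²(D, μ; ℝ³)` whose elements
are all essentially bounded. Then there is a constant `C` (depending only on `X`) such that
for every `η > 0` and all `ρ₁, ρ₂ ∈ L^∞` with `ρ₁, ρ₂ ≥ η` a.e., the square-root-weighted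
operators `M[√ρᵢ] : X → X`, determined by `⟪M[√ρ]v, w⟫_{L²} = ∫ √ρ (v·w) dμ`, satisfy
`‖M[√ρ₁] − M[√ρ₂]‖_{L(X,X)} ≤ (C / (2√η)) ‖ρ₁ − ρ₂‖_{L²(D,μ)}`. -/
theorem stmt_4 {D : Type*} [MeasurableSpace D] (μ : Measure D) [IsFiniteMeasure μ]
    (X : Submodule ℝ (Lp (EuclideanSpace ℝ (Fin 3)) 2 μ)) [FiniteDimensional ℝ X]
    (hX_bdd : ∀ v : X, MemLp (((v : X) : Lp (EuclideanSpace ℝ (Fin 3)) 2 μ) : D → EuclideanSpace ℝ (Fin 3)) ⊤ μ) :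
    ∃ C : ℝ, ∀ η : ℝ, 0 < η → ∀ ρ₁ ρ₂ : D → ℝ,
      Measurable ρ₁ → Measurable ρ₂ → MemLp ρ₁ ⊤ μ → MemLp ρ₂ ⊤ μ →
      (∀ᵐ x ∂μ, η ≤ ρ₁ x) → (∀ᵐ x ∂μ, η ≤ ρ₂ x) →
      ∀ M₁ M₂ : X →L[ℝ] X,
        (∀ v w : X,
          ⟪((M₁ v : X) : Lp (EuclideanSpace ℝ (Fin 3)) 2 μ),
              ((w : X) : Lp (EuclideanSpace ℝ (Fin 3)) 2 μ)⟫
            = ∫ x, Real.sqrt (ρ₁ x) * ⟪((v : X) : Lp (EuclideanSpace ℝ (Fin 3)) 2 μ) x,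
                ((w : X) : Lp (EuclideanSpace ℝ (Fin 3)) 2 μ) x⟫ ∂μ) →
        (∀ v w : X,
          ⟪((M₂ v : X) : Lp (EuclideanSpace ℝ (Fin 3)) 2 μ),
              ((w : X) : Lp (EuclideanSpace ℝ (Fin 3)) 2 μ)⟫
            = ∫ x, Real.sqrt (ρ₂ x) * ⟪((v : X) : Lp (EuclideanSpace ℝ (Fin 3)) 2 μ) x,
                ((w : X) : Lp (EuclideanSpace ℝ (Fin 3)) 2 μ) x⟫ ∂μ) →
        ‖M₁ - M₂‖ ≤ (C / (2 * Real.sqrt η)) *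
          (∫ x, (ρ₁ x - ρ₂ x) ^ 2 ∂μ) ^ ((1 : ℝ) / 2) := by
  classical
  obtain ⟨C, hC0, hC⟩ := exists_unif_bound μ X hX_bdd
  refine ⟨C, ?_⟩
  intro η hη ρ₁ ρ₂ hm₁ hm₂ hl₁ hl₂ hae₁ hae₂ M₁ M₂ hM₁ hM₂
  have hsη : (0:ℝ) < 2 * Real.sqrt η := by positivity
  set r : D → ℝ := fun x => ρ₁ x - ρ₂ x with hr_def
  have hr_top : MemLp r ⊤ μ := hl₁.sub hl₂
  have hr2 : MemLp r 2 μ := hr_top.mono_exponent le_top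
  set I : ℝ := (∫ x, (ρ₁ x - ρ₂ x) ^ 2 ∂μ) ^ ((1 : ℝ) / 2) with hI_def
  have hint_nonneg : (0:ℝ) ≤ ∫ x, (ρ₁ x - ρ₂ x) ^ 2 ∂μ :=
    integral_nonneg fun x => sq_nonneg _
  have hI0 : 0 ≤ I := Real.rpow_nonneg hint_nonneg _
  have hInorm : (eLpNorm r 2 μ).toReal = I := by
    rw [hr2.eLpNorm_eq_integral_rpow_norm two_ne_zero ENNReal.ofNat_ne_top]
    rw [ENNReal.toReal_ofReal (by positivity)]
    have he : (∫ a, ‖r a‖ ^ (2:ℝ≥0∞).toReal ∂μ) = ∫ x, (ρ₁ x - ρ₂ x) ^ 2 ∂μ := by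
      simp only [ENNReal.toReal_ofNat]
      congr 1
      funext x
      rw [Real.norm_eq_abs, Real.rpow_two, sq_abs]
    rw [he, hI_def]
    norm_num
  -- norm bound for sqrt of a bounded function
  have hsqrt_bdd : ∀ ρ : D → ℝ, MemLp ρ ⊤ μ → ∃ B : ℝ, ∀ᵐ x ∂μ, ‖Real.sqrt (ρ x)‖ ≤ B := by
    intro ρ hρ
    refine ⟨Real.sqrt (eLpNormEssSup ρ μ).toReal, ?_⟩
    have hfin : eLpNormEssSup ρ μ ≠ ⊤ := by
      have := hρ.2; rwa [eLpNorm_exponent_top, lt_top_iff_ne_top] at this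
    filter_upwards [ae_le_eLpNormEssSup (f := ρ) (μ := μ)] with x hx
    rw [Real.norm_eq_abs, abs_of_nonneg (Real.sqrt_nonneg _)]
    apply Real.sqrt_le_sqrt
    calc ρ x ≤ |ρ x| := le_abs_self _
    _ = ((‖ρ x‖₊ : ℝ≥0∞)).toReal := by simp [Real.norm_eq_abs]
    _ ≤ (eLpNormEssSup ρ μ).toReal := ENNReal.toReal_mono hfin hx
  obtain ⟨B₁, hB₁⟩ := hsqrt_bdd ρ₁ hl₁
  obtain ⟨B₂, hB₂⟩ := hsqrt_bdd ρ₂ hl₂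
  -- bound for r
  have hr_bdd : ∃ Br : ℝ, ∀ᵐ x ∂μ, ‖‖r x‖‖ ≤ Br := by
    have hfin : eLpNormEssSup r μ ≠ ⊤ := by
      have := hr_top.2; rwa [eLpNorm_exponent_top, lt_top_iff_ne_top] at this
    refine ⟨(eLpNormEssSup r μ).toReal, ?_⟩
    filter_upwards [ae_le_eLpNormEssSup (f := r) (μ := μ)] with x hx
    rw [norm_norm]
    have := ENNReal.toReal_mono hfin hx
    simpa using this
  obtain ⟨Br, hBr⟩ := hr_bdd
  -- the two L² elements for Cauchy-Schwarz
  have habs : MemLp (fun x => ‖r x‖) 2 μ := hr2.norm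
  have hFnorm : ‖habs.toLp _‖ = I := by
    rw [Lp.norm_toLp, eLpNorm_norm, hInorm]
  -- key estimate
  have key : ∀ v w : X,
      |(∫ x, Real.sqrt (ρ₁ x) * ⟪((v : X) : Lp E 2 μ) x, ((w : X) : Lp E 2 μ) x⟫ ∂μ)
        - (∫ x, Real.sqrt (ρ₂ x) * ⟪((v : X) : Lp E 2 μ) x, ((w : X) : Lp E 2 μ) x⟫ ∂μ)|
      ≤ C / (2 * Real.sqrt η) * I * ‖v‖ * ‖w‖ := by
    intro v w
    have hv := hC v
    have hip : Integrable (fun x => ⟪((v : X) : Lp E 2 μ) x, ((w : X) : Lp E 2 μ) x⟫) μ :=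
      L2.integrable_inner (𝕜 := ℝ) _ _
    have hmsq₁ : AEStronglyMeasurable (fun x => Real.sqrt (ρ₁ x)) μ :=
      (Real.continuous_sqrt.measurable.comp hm₁).aestronglyMeasurable
    have hmsq₂ : AEStronglyMeasurable (fun x => Real.sqrt (ρ₂ x)) μ :=
      (Real.continuous_sqrt.measurable.comp hm₂).aestronglyMeasurable
    have hint₁ : Integrable
        (fun x => Real.sqrt (ρ₁ x) * ⟪((v : X) : Lp E 2 μ) x, ((w : X) : Lp E 2 μ) x⟫) μ :=
      hip.bdd_mul hmsq₁ hB₁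
    have hint₂ : Integrable
        (fun x => Real.sqrt (ρ₂ x) * ⟪((v : X) : Lp E 2 μ) x, ((w : X) : Lp E 2 μ) x⟫) μ :=
      hip.bdd_mul hmsq₂ hB₂
    rw [← integral_sub hint₁ hint₂]
    -- integrable dominating function
    have hwint : Integrable (fun x => ‖((w : X) : Lp E 2 μ) x‖) μ := by
      have : MemLp (((w : X) : Lp E 2 μ) : D → E) 1 μ :=
        (Lp.memLp ((w : X) : Lp E 2 μ)).mono_exponent (by norm_num)
      exact (memLp_one_iff_integrable.mp this).norm
    have hg : Integrable (fun x => ‖r x‖ * ‖((w : X) : Lp E 2 μ) x‖) μ :=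
      hwint.bdd_mul ((hm₁.sub hm₂).norm.aestronglyMeasurable) hBr
    have hg' : Integrable
        (fun x => C * ‖v‖ / (2 * Real.sqrt η) * (‖r x‖ * ‖((w : X) : Lp E 2 μ) x‖)) μ :=
      hg.const_mul _
    have step1 : |∫ x, (Real.sqrt (ρ₁ x) * ⟪((v : X) : Lp E 2 μ) x, ((w : X) : Lp E 2 μ) x⟫
          - Real.sqrt (ρ₂ x) * ⟪((v : X) : Lp E 2 μ) x, ((w : X) : Lp E 2 μ) x⟫) ∂μ|
        ≤ ∫ x, C * ‖v‖ / (2 * Real.sqrt η) * (‖r x‖ * ‖((w : X) : Lp E 2 μ) x‖) ∂μ := by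
      have habs0 : |∫ x, (Real.sqrt (ρ₁ x) * ⟪((v : X) : Lp E 2 μ) x, ((w : X) : Lp E 2 μ) x⟫
            - Real.sqrt (ρ₂ x) * ⟪((v : X) : Lp E 2 μ) x, ((w : X) : Lp E 2 μ) x⟫) ∂μ|
          ≤ ∫ x, |Real.sqrt (ρ₁ x) * ⟪((v : X) : Lp E 2 μ) x, ((w : X) : Lp E 2 μ) x⟫
            - Real.sqrt (ρ₂ x) * ⟪((v : X) : Lp E 2 μ) x, ((w : X) : Lp E 2 μ) x⟫| ∂μ := by
        simpa [Real.norm_eq_abs] using norm_integral_le_integral_norm (μ := μ)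
          (fun x => Real.sqrt (ρ₁ x) * ⟪((v : X) : Lp E 2 μ) x, ((w : X) : Lp E 2 μ) x⟫
            - Real.sqrt (ρ₂ x) * ⟪((v : X) : Lp E 2 μ) x, ((w : X) : Lp E 2 μ) x⟫)
      refine habs0.trans ?_
      refine integral_mono_ae (hint₁.sub hint₂).abs hg' ?_
      filter_upwards [hae₁, hae₂, hv] with x h1 h2 h3
      have e1 : Real.sqrt (ρ₁ x) * ⟪((v : X) : Lp E 2 μ) x, ((w : X) : Lp E 2 μ) x⟫
          - Real.sqrt (ρ₂ x) * ⟪((v : X) : Lp E 2 μ) x, ((w : X) : Lp E 2 μ) x⟫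
          = (Real.sqrt (ρ₁ x) - Real.sqrt (ρ₂ x))
              * ⟪((v : X) : Lp E 2 μ) x, ((w : X) : Lp E 2 μ) x⟫ := by ring
      rw [e1, abs_mul]
      have h4 := sqrt_diff_le hη h1 h2
      have h5 : |⟪((v : X) : Lp E 2 μ) x, ((w : X) : Lp E 2 μ) x⟫|
          ≤ ‖((v : X) : Lp E 2 μ) x‖ * ‖((w : X) : Lp E 2 μ) x‖ := abs_real_inner_le_norm _ _
      calc |Real.sqrt (ρ₁ x) - Real.sqrt (ρ₂ x)|
            * |⟪((v : X) : Lp E 2 μ) x, ((w : X) : Lp E 2 μ) x⟫|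
          ≤ (|ρ₁ x - ρ₂ x| / (2 * Real.sqrt η))
            * (‖((v : X) : Lp E 2 μ) x‖ * ‖((w : X) : Lp E 2 μ) x‖) :=
            mul_le_mul h4 h5 (abs_nonneg _) (div_nonneg (abs_nonneg _) hsη.le)
        _ ≤ (|ρ₁ x - ρ₂ x| / (2 * Real.sqrt η)) * ((C * ‖v‖) * ‖((w : X) : Lp E 2 μ) x‖) := by
            refine mul_le_mul_of_nonneg_left ?_ (div_nonneg (abs_nonneg _) hsη.le)
            exact mul_le_mul_of_nonneg_right h3 (norm_nonneg _)
        _ = C * ‖v‖ / (2 * Real.sqrt η) * (‖r x‖ * ‖((w : X) : Lp E 2 μ) x‖) := by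
            rw [hr_def, Real.norm_eq_abs]
            field_simp
    -- Cauchy-Schwarz
    have hw2 : MemLp (fun x => ‖((w : X) : Lp E 2 μ) x‖) 2 μ := (Lp.memLp _).norm
    have hGnorm : ‖hw2.toLp _‖ = ‖w‖ := by
      rw [Lp.norm_toLp, eLpNorm_norm, ← Lp.norm_def, Submodule.coe_norm]
    have hCS : ∫ x, ‖r x‖ * ‖((w : X) : Lp E 2 μ) x‖ ∂μ ≤ I * ‖w‖ := by
      have hinner : ∫ x, ‖r x‖ * ‖((w : X) : Lp E 2 μ) x‖ ∂μ
          = ⟪(habs.toLp _ : Lp ℝ 2 μ), (hw2.toLp _ : Lp ℝ 2 μ)⟫ := by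
        rw [L2.inner_def]
        refine integral_congr_ae ?_
        filter_upwards [habs.coeFn_toLp, hw2.coeFn_toLp] with x h1 h2
        rw [RCLike.inner_apply, conj_trivial, h1, h2, mul_comm]
      rw [hinner, ← hFnorm, ← hGnorm]
      exact real_inner_le_norm _ _
    refine step1.trans ?_
    rw [integral_const_mul]
    calc C * ‖v‖ / (2 * Real.sqrt η) * ∫ x, ‖r x‖ * ‖((w : X) : Lp E 2 μ) x‖ ∂μ
        ≤ C * ‖v‖ / (2 * Real.sqrt η) * (I * ‖w‖) := by
          refine mul_le_mul_of_nonneg_left hCS ?_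
          exact div_nonneg (mul_nonneg hC0 (norm_nonneg _)) hsη.le
      _ = C / (2 * Real.sqrt η) * I * ‖v‖ * ‖w‖ := by ring
  -- conclude
  have hK0 : 0 ≤ C / (2 * Real.sqrt η) * I :=
    mul_nonneg (div_nonneg hC0 hsη.le) hI0
  refine ContinuousLinearMap.opNorm_le_bound _ hK0 fun v => ?_
  set w : X := (M₁ - M₂) v with hw_def
  have hsub : ((w : X) : Lp E 2 μ)
      = ((M₁ v : X) : Lp E 2 μ) - ((M₂ v : X) : Lp E 2 μ) := by
    rw [hw_def, ContinuousLinearMap.sub_apply, Submodule.coe_sub]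
  have e : ⟪((M₁ v : X) : Lp E 2 μ), ((w : X) : Lp E 2 μ)⟫
      - ⟪((M₂ v : X) : Lp E 2 μ), ((w : X) : Lp E 2 μ)⟫ = ‖w‖ ^ 2 := by
    rw [← inner_sub_left, ← hsub, real_inner_self_eq_norm_sq, Submodule.coe_norm]
  have h := key v w
  rw [← hM₁ v w, ← hM₂ v w, e, abs_of_nonneg (sq_nonneg _)] at h
  rcases (norm_nonneg w).eq_or_lt with h0 | hpos
  · rw [← h0]
    exact mul_nonneg hK0 (norm_nonneg _)
  · have h' : ‖w‖ * ‖w‖ ≤ (C / (2 * Real.sqrt η) * I * ‖v‖) * ‖w‖ := by nlinarith [h]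
    exact le_of_mul_le_mul_right h' hpos
end

section
/- Let (β_t)_{t≥0} be a standard one-dimensional Brownian motion and let T > 0. There is a constant C depending only on T such that for every L > 0, P( there exists m ∈ ℕ with m ≥ 1 such that sup_{t₁,t₂ ∈ [0,T], |t₁ − t₂| ≤ m^{-6}} m·|β_{t₁} − β_{t₂}| > L ) ≤ C / L⁴. In particular this probability tends to 0 as L → ∞. -/
open MeasureTheory
open scoped ENNReal
open ProbabilityTheory Real
open scoped NNReal


lemma exp_ge_sq_div_four {t : ℝ} (ht : 0 ≤ t) : t^2/4 ≤ Real.exp t := by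
  have h1 : t/2 + 1 ≤ Real.exp (t/2) := Real.add_one_le_exp (t/2)
  have h4 : Real.exp (t/2) * Real.exp (t/2) = Real.exp t := by
    rw [← Real.exp_add]; norm_num
  nlinarith [Real.exp_pos (t/2)]


lemma gauss_moment4 {v : ℝ≥0} (hv : v ≠ 0) :
    ∫⁻ x, ENNReal.ofReal (x^4) ∂(gaussianReal 0 v) ≤ ENNReal.ofReal (128 * (v:ℝ)^2) := by
  have hvpos : (0:ℝ) < (v:ℝ) := by
    exact_mod_cast pos_iff_ne_zero.mpr hv
  have hb : (0:ℝ) < 1/(4*(v:ℝ)) := by positivity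
  have hsq : Real.sqrt (2 * Real.pi * v) ≠ 0 := by
    refine (Real.sqrt_pos.mpr ?_).ne'
    positivity
  rw [gaussianReal_of_var_ne_zero 0 hv,
    lintegral_withDensity_eq_lintegral_mul _ (measurable_gaussianPDF 0 v)
      (by fun_prop)]
  have key : ∀ x : ℝ, (gaussianPDF 0 v * fun x => ENNReal.ofReal (x^4)) x
      ≤ ENNReal.ofReal ((64 * (v:ℝ)^2 * (Real.sqrt (2 * Real.pi * v))⁻¹) *
        Real.exp (-(1/(4*(v:ℝ))) * x^2)) := by
    intro x
    simp only [Pi.mul_apply, gaussianPDF, ← ENNReal.ofReal_mul (gaussianPDFReal_nonneg 0 v x)]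
    refine ENNReal.ofReal_le_ofReal ?_
    rw [gaussianPDFReal]
    have hx4 : x^4 ≤ 64 * (v:ℝ)^2 * Real.exp ((1/(4*(v:ℝ))) * x^2) := by
      have ht : (0:ℝ) ≤ (1/(4*(v:ℝ))) * x^2 := by positivity
      have h := exp_ge_sq_div_four ht
      have hne : (v:ℝ) ≠ 0 := hvpos.ne'
      have : ((1/(4*(v:ℝ))) * x^2)^2 / 4 = x^4 / (64 * (v:ℝ)^2) := by
        field_simp; ring
      rw [this] at h
      calc x^4 = (x^4 / (64 * (v:ℝ)^2)) * (64 * (v:ℝ)^2) := by field_simp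
        _ ≤ Real.exp ((1/(4*(v:ℝ))) * x^2) * (64 * (v:ℝ)^2) := by
            apply mul_le_mul_of_nonneg_right h; positivity
        _ = 64 * (v:ℝ)^2 * Real.exp ((1/(4*(v:ℝ))) * x^2) := by ring
    have hEsplit : Real.exp (-(x-0)^2/(2*(v:ℝ)))
        = Real.exp (-(1/(4*(v:ℝ))) * x^2) * Real.exp (-(1/(4*(v:ℝ))) * x^2) := by
      rw [← Real.exp_add]
      congr 1
      field_simp
      ring
    have hprod : Real.exp (-(1/(4*(v:ℝ))) * x^2) * Real.exp ((1/(4*(v:ℝ))) * x^2) = 1 := by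
      rw [← Real.exp_add]; simp
    have hB : (0:ℝ) < Real.exp (-(1/(4*(v:ℝ))) * x^2) := Real.exp_pos _
    have hS : (0:ℝ) ≤ (Real.sqrt (2 * Real.pi * v))⁻¹ := by positivity
    have step : x^4 * (Real.exp (-(1/(4*(v:ℝ))) * x^2) * Real.exp (-(1/(4*(v:ℝ))) * x^2))
        ≤ 64 * (v:ℝ)^2 * Real.exp (-(1/(4*(v:ℝ))) * x^2) := by
      have h5 : x^4 * Real.exp (-(1/(4*(v:ℝ))) * x^2)
          ≤ 64 * (v:ℝ)^2 * Real.exp ((1/(4*(v:ℝ))) * x^2) * Real.exp (-(1/(4*(v:ℝ))) * x^2) :=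
        mul_le_mul_of_nonneg_right hx4 hB.le
      have h6 : 64 * (v:ℝ)^2 * Real.exp ((1/(4*(v:ℝ))) * x^2) * Real.exp (-(1/(4*(v:ℝ))) * x^2)
          = 64 * (v:ℝ)^2 := by
        rw [mul_assoc]
        rw [mul_comm (Real.exp ((1/(4*(v:ℝ))) * x^2)) _, hprod, mul_one]
      have h7 : x^4 * Real.exp (-(1/(4*(v:ℝ))) * x^2) ≤ 64 * (v:ℝ)^2 := h5.trans_eq h6
      calc x^4 * (Real.exp (-(1/(4*(v:ℝ))) * x^2) * Real.exp (-(1/(4*(v:ℝ))) * x^2))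
          = (x^4 * Real.exp (-(1/(4*(v:ℝ))) * x^2)) * Real.exp (-(1/(4*(v:ℝ))) * x^2) := by ring
        _ ≤ 64 * (v:ℝ)^2 * Real.exp (-(1/(4*(v:ℝ))) * x^2) :=
            mul_le_mul_of_nonneg_right h7 hB.le
    calc (Real.sqrt (2 * Real.pi * v))⁻¹ * Real.exp (-(x-0)^2/(2*(v:ℝ))) * x^4
        = (Real.sqrt (2 * Real.pi * v))⁻¹ *
          (x^4 * (Real.exp (-(1/(4*(v:ℝ))) * x^2) * Real.exp (-(1/(4*(v:ℝ))) * x^2))) := by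
          rw [hEsplit]; ring
      _ ≤ (Real.sqrt (2 * Real.pi * v))⁻¹ * (64 * (v:ℝ)^2 * Real.exp (-(1/(4*(v:ℝ))) * x^2)) :=
          mul_le_mul_of_nonneg_left step hS
      _ = 64 * (v:ℝ)^2 * (Real.sqrt (2 * Real.pi * v))⁻¹ * Real.exp (-(1/(4*(v:ℝ))) * x^2) := by
          ring
  calc ∫⁻ x, (gaussianPDF 0 v * fun x => ENNReal.ofReal (x^4)) x
      ≤ ∫⁻ x, ENNReal.ofReal ((64 * (v:ℝ)^2 * (Real.sqrt (2 * Real.pi * v))⁻¹) *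
          Real.exp (-(1/(4*(v:ℝ))) * x^2)) := lintegral_mono key
    _ = ENNReal.ofReal (∫ x, (64 * (v:ℝ)^2 * (Real.sqrt (2 * Real.pi * v))⁻¹) *
          Real.exp (-(1/(4*(v:ℝ))) * x^2)) := by
        rw [← ofReal_integral_eq_lintegral_ofReal]
        · exact (integrable_exp_neg_mul_sq hb).const_mul _
        · filter_upwards with x
          positivity
    _ ≤ ENNReal.ofReal (128 * (v:ℝ)^2) := by
        refine ENNReal.ofReal_le_ofReal ?_
        rw [integral_const_mul, integral_gaussian]
        have h4 : Real.pi / (1/(4*(v:ℝ))) = 2 * (2 * Real.pi * v) := by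
          field_simp; ring
        rw [h4, Real.sqrt_mul (by norm_num : (0:ℝ) ≤ 2)]
        have hS2 : Real.sqrt 2 ≤ 2 := by
          nlinarith [Real.sq_sqrt (show (0:ℝ) ≤ 2 by norm_num), Real.sqrt_nonneg 2]
        have hne : Real.sqrt (2 * Real.pi * v) ≠ 0 := hsq
        calc 64 * (v:ℝ)^2 * (Real.sqrt (2 * Real.pi * v))⁻¹ *
              (Real.sqrt 2 * Real.sqrt (2 * Real.pi * v))
            = 64 * (v:ℝ)^2 * Real.sqrt 2 *
              ((Real.sqrt (2 * Real.pi * v))⁻¹ * Real.sqrt (2 * Real.pi * v)) := by ring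
          _ = 64 * (v:ℝ)^2 * Real.sqrt 2 := by rw [inv_mul_cancel₀ hne, mul_one]
          _ ≤ 128 * (v:ℝ)^2 := by nlinarith [sq_nonneg (v:ℝ), Real.sqrt_nonneg 2]

lemma gauss_tail (v : ℝ≥0) {c : ℝ} (hc : 0 < c) :
    gaussianReal 0 v {x | c ≤ |x|} ≤ ENNReal.ofReal (128 * (v:ℝ)^2 / c^4) := by
  have hset : MeasurableSet {x : ℝ | c ≤ |x|} :=
    measurableSet_le measurable_const measurable_abs
  rcases eq_or_ne v 0 with hv | hv
  · subst hv
    rw [gaussianReal_zero_var, Measure.dirac_apply' _ hset]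
    have : (0:ℝ) ∉ {x : ℝ | c ≤ |x|} := by simp [hc.not_ge]
    rw [Set.indicator_of_notMem this]
    exact zero_le
  · have hc4 : (0:ℝ) < c^4 := by positivity
    have hsub : {x : ℝ | c ≤ |x|} ⊆ {x : ℝ | ENNReal.ofReal (c^4) ≤ ENNReal.ofReal (x^4)} := by
      intro x hx
      simp only [Set.mem_setOf_eq] at hx ⊢
      refine ENNReal.ofReal_le_ofReal ?_
      calc c^4 ≤ |x|^4 := pow_le_pow_left₀ hc.le hx 4
        _ = |x^4| := (abs_pow x 4).symm
        _ = x^4 := abs_of_nonneg (by positivity)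
    calc gaussianReal 0 v {x | c ≤ |x|}
        ≤ gaussianReal 0 v {x | ENNReal.ofReal (c^4) ≤ ENNReal.ofReal (x^4)} :=
          measure_mono hsub
      _ ≤ (∫⁻ x, ENNReal.ofReal (x^4) ∂(gaussianReal 0 v)) / ENNReal.ofReal (c^4) := by
          refine meas_ge_le_lintegral_div ?_ ?_ ?_
          · fun_prop
          · simp [ENNReal.ofReal_eq_zero, hc4.not_ge]
          · exact ENNReal.ofReal_ne_top
      _ ≤ ENNReal.ofReal (128 * (v:ℝ)^2) / ENNReal.ofReal (c^4) := by
          gcongr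
          exact gauss_moment4 hv
      _ = ENNReal.ofReal (128 * (v:ℝ)^2 / c^4) := by
          rw [ENNReal.ofReal_div_of_pos hc4]

lemma incr_tail {Ω : Type*} [MeasurableSpace Ω] (P : Measure Ω)
    (β : ℝ → Ω → ℝ) (hmeas : ∀ t : ℝ, Measurable (β t))
    (hgauss : ∀ s t : ℝ, 0 ≤ s → s ≤ t →
      Measure.map (fun ω => β t ω - β s ω) P
        = ProbabilityTheory.gaussianReal 0 (Real.toNNReal (t - s)))
    {s t c : ℝ} (hs : 0 ≤ s) (hst : s ≤ t) (hc : 0 < c) :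
    P {ω | c ≤ |β t ω - β s ω|} ≤ ENNReal.ofReal (128 * (t-s)^2 / c^4) := by
  have hX : Measurable (fun ω => β t ω - β s ω) := (hmeas t).sub (hmeas s)
  have hset : MeasurableSet {x : ℝ | c ≤ |x|} :=
    measurableSet_le measurable_const measurable_abs
  have heq : {ω | c ≤ |β t ω - β s ω|} = (fun ω => β t ω - β s ω) ⁻¹' {x | c ≤ |x|} := rfl
  rw [heq, ← Measure.map_apply hX hset, hgauss s t hs hst]
  have := gauss_tail (Real.toNNReal (t - s)) hc
  have hco : ((Real.toNNReal (t - s) : ℝ≥0) : ℝ) = t - s := Real.coe_toNNReal _ (by linarith)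
  rwa [hco] at this

lemma chain_dyadic (f : ℝ → ℝ) (T' : ℝ) (c : ℕ → ℝ) (hc : ∀ j, 0 ≤ c j) (j₀ : ℕ)
    (H : ∀ j, j₀ ≤ j → ∀ k : ℕ, ((k:ℝ)+1)/2^j ≤ T' → |f (((k:ℝ)+1)/2^j) - f ((k:ℝ)/2^j)| ≤ c j) :
    ∀ n, j₀ ≤ n → ∀ p q : ℕ, p ≤ q → q ≤ p + 2^(n - j₀) → ((q:ℝ))/2^n ≤ T' →
      |f ((q:ℝ)/2^n) - f ((p:ℝ)/2^n)| ≤ 2 * ∑ j ∈ Finset.Icc j₀ n, c j := by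
  intro n hn
  induction n, hn using Nat.le_induction with
  | base =>
    intro p q hpq hq hqT
    rw [Nat.sub_self, pow_zero] at hq
    rw [Finset.Icc_self, Finset.sum_singleton]
    rcases Nat.eq_or_lt_of_le hpq with h | h
    · subst h; simp [hc j₀]
    · have hq' : q = p + 1 := by omega
      subst hq'
      have := H j₀ le_rfl p (by push_cast at hqT ⊢; linarith)
      push_cast at this ⊢
      linarith [hc j₀]
  | succ n hn ih =>
    intro p q hpq hq hqT
    have hpos : (0:ℝ) < 2^(n+1) := by positivity
    have hsum_n : (0:ℝ) ≤ ∑ j ∈ Finset.Icc j₀ n, c j := Finset.sum_nonneg fun i _ => hc i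
    have hsumtop : ∑ j ∈ Finset.Icc j₀ (n+1), c j
        = (∑ j ∈ Finset.Icc j₀ n, c j) + c (n+1) := Finset.sum_Icc_succ_top (by omega) c
    by_cases hq1 : q ≤ p + 1
    · rcases Nat.eq_or_lt_of_le hpq with h | h
      · subst h; simp only [sub_self, abs_zero]; rw [hsumtop]; linarith [hc (n+1)]
      · have hq' : q = p + 1 := by omega
        subst hq'
        have := H (n+1) (by omega) p (by push_cast at hqT ⊢; linarith)
        push_cast at this ⊢
        rw [hsumtop]
        linarith [hc (n+1)]
    · set p' := (p+1)/2 with hp'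
      set q' := q/2 with hq'
      set A := 2^(n - j₀) with hA
      have hApow : 2^(n+1-j₀) = 2*A := by
        rw [hA, ← pow_succ']
        congr 1
        omega
      rw [hApow] at hq
      have h2p' : p ≤ 2*p' ∧ 2*p' ≤ p+1 := by constructor <;> omega
      have h2q' : 2*q' ≤ q ∧ q ≤ 2*q'+1 := by constructor <;> omega
      have hp'q' : p' ≤ q' := by omega
      have hq'A : q' ≤ p' + A := by omega
      -- cast identities
      have cast1 : ((2*q' : ℕ):ℝ)/2^(n+1) = ((q':ℕ):ℝ)/2^n := by
        push_cast
        rw [pow_succ]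
        field_simp
      have cast2 : ((2*p' : ℕ):ℝ)/2^(n+1) = ((p':ℕ):ℝ)/2^n := by
        push_cast
        rw [pow_succ]
        field_simp
      have hmono : ((2*q' : ℕ):ℝ)/2^(n+1) ≤ ((q:ℕ):ℝ)/2^(n+1) := by
        apply div_le_div_of_nonneg_right _ hpos.le  -- maybe wrong name/direction
        exact_mod_cast h2q'.1
      have hq'T : ((q':ℕ):ℝ)/2^n ≤ T' := by
        rw [← cast1]; exact hmono.trans hqT
      have hmid := ih p' q' hp'q' hq'A hq'T
      -- left edge
      have hleft : |f (((2*p' : ℕ):ℝ)/2^(n+1)) - f (((p:ℕ):ℝ)/2^(n+1))| ≤ c (n+1) := by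
        rcases (by omega : 2*p' = p ∨ 2*p' = p + 1) with h | h
        · rw [h]; simp [hc (n+1)]
        · rw [h]
          have hb : ((p:ℝ)+1)/2^(n+1) ≤ T' := by
            refine le_trans ?_ hqT
            apply div_le_div_of_nonneg_right _ hpos.le
            have : p + 1 ≤ q := by omega
            exact_mod_cast this
          have := H (n+1) (by omega) p hb
          push_cast
          push_cast at this
          exact this
      -- right edge
      have hright : |f (((q:ℕ):ℝ)/2^(n+1)) - f (((2*q' : ℕ):ℝ)/2^(n+1))| ≤ c (n+1) := by
        rcases (by omega : 2*q' = q ∨ q = 2*q' + 1) with h | h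
        · rw [h]; simp [hc (n+1)]
        · have hb : (((2*q' : ℕ):ℝ)+1)/2^(n+1) ≤ T' := by
            have : (((2*q' : ℕ):ℝ)+1) = (q:ℝ) := by
              rw [h]; push_cast; ring
            rw [this]; exact hqT
          have := H (n+1) (by omega) (2*q') hb
          have hcast : (((2*q' : ℕ):ℝ)+1) = (q:ℝ) := by rw [h]; push_cast; ring
          rw [hcast] at this
          exact this
      calc |f ((q:ℝ)/2^(n+1)) - f ((p:ℝ)/2^(n+1))|
          ≤ |f ((q:ℝ)/2^(n+1)) - f (((2*q' : ℕ):ℝ)/2^(n+1))|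
            + |f (((2*q' : ℕ):ℝ)/2^(n+1)) - f (((2*p' : ℕ):ℝ)/2^(n+1))|
            + |f (((2*p' : ℕ):ℝ)/2^(n+1)) - f ((p:ℝ)/2^(n+1))| := by
            have := abs_sub_le (f ((q:ℝ)/2^(n+1))) (f (((2*q' : ℕ):ℝ)/2^(n+1))) (f ((p:ℝ)/2^(n+1)))
            have h2 := abs_sub_le (f (((2*q' : ℕ):ℝ)/2^(n+1))) (f (((2*p' : ℕ):ℝ)/2^(n+1))) (f ((p:ℝ)/2^(n+1)))
            linarith
        _ ≤ c (n+1) + 2 * (∑ j ∈ Finset.Icc j₀ n, c j) + c (n+1) := by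
            rw [cast1, cast2]
            have h1 := hright
            have h2 := hleft
            have h3 := hmid
            rw [cast1] at h1
            rw [cast2] at h2
            linarith
        _ ≤ 2 * ∑ j ∈ Finset.Icc j₀ (n+1), c j := by
            rw [hsumtop]; linarith

lemma chain_real_aux (f : ℝ → ℝ) (hf : ContinuousOn f (Set.Ici 0)) (T T' S : ℝ)
    (hT' : T + 1 ≤ T')
    (c : ℕ → ℝ) (hc : ∀ j, 0 ≤ c j) (j₀ : ℕ)
    (hS : ∀ n, j₀ ≤ n → 2 * ∑ j ∈ Finset.Icc j₀ n, c j ≤ S)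
    (H : ∀ j, j₀ ≤ j → ∀ k : ℕ, ((k:ℝ)+1)/2^j ≤ T' → |f (((k:ℝ)+1)/2^j) - f ((k:ℝ)/2^j)| ≤ c j)
    {t₁ t₂ : ℝ} (h₁ : t₁ ∈ Set.Icc 0 T) (h₂ : t₂ ∈ Set.Icc 0 T) (h12 : t₁ ≤ t₂)
    (hgap : t₂ - t₁ ≤ 1/2^j₀) :
    |f t₂ - f t₁| ≤ 2 * S := by
  obtain ⟨ht₁0, ht₁T⟩ := h₁
  obtain ⟨ht₂0, ht₂T⟩ := h₂
  set x : ℕ → ℝ := fun n => ((⌈2^n * t₁⌉₊ : ℕ):ℝ)/2^n with hx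
  set y : ℕ → ℝ := fun n => ((⌈2^n * t₂⌉₊ : ℕ):ℝ)/2^n with hy
  -- key bound for n ≥ j₀
  have key : ∀ n, j₀ ≤ n → |f (y n) - f (x n)| ≤ 2 * S := by
    intro n hn
    set p := ⌈2^n * t₁⌉₊ with hp
    set q := ⌈2^n * t₂⌉₊ with hqdef
    have hpow : (0:ℝ) < 2^n := by positivity
    have hple : (2:ℝ)^n * t₁ ≤ p := Nat.le_ceil _
    have hplt : (p:ℝ) < 2^n * t₁ + 1 := Nat.ceil_lt_add_one (by positivity)
    have hqle : (2:ℝ)^n * t₂ ≤ q := Nat.le_ceil _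
    have hqlt : (q:ℝ) < 2^n * t₂ + 1 := Nat.ceil_lt_add_one (by positivity)
    have hpq : p ≤ q := Nat.ceil_le_ceil (by nlinarith)
    have hpowsub : (2:ℝ)^(n - j₀) * 2^j₀ = 2^n := by
      rw [← pow_add]
      congr 1
      omega
    have hgapn : (q:ℝ) < (p:ℝ) + 2^(n - j₀) + 2 := by
      have h1 : (2:ℝ)^n * (t₂ - t₁) ≤ 2^n / 2^j₀ := by
        rw [div_eq_mul_inv]
        calc (2:ℝ)^n * (t₂ - t₁) ≤ 2^n * (1/2^j₀) := by
              apply mul_le_mul_of_nonneg_left hgap hpow.le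
          _ = 2^n * (2^j₀:ℝ)⁻¹ := by rw [one_div]
      have h2 : (2:ℝ)^n / 2^j₀ = 2^(n - j₀) := by
        rw [← hpowsub]
        field_simp
      nlinarith
    have hqnat : q ≤ p + 2^(n - j₀) + 1 := by
      have : (q:ℝ) < ((p + 2^(n - j₀) + 2 : ℕ):ℝ) := by push_cast; linarith
      have := Nat.cast_lt.mp this
      omega
    have hqT' : (q:ℝ)/2^n ≤ T' := by
      rw [div_le_iff₀ hpow]
      have h1 : (1:ℝ) ≤ 2^n := one_le_pow₀ (by norm_num)
      nlinarith
    have hmle : ∀ r : ℕ, r ≤ q → ((r:ℕ):ℝ)/2^n ≤ T' := by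
      intro r hr
      refine le_trans ?_ hqT'
      apply div_le_div_of_nonneg_right _ hpow.le
      exact_mod_cast hr
    set m := min q (p + 2^(n - j₀)) with hm
    have hB1 : 1 ≤ 2^(n - j₀) := Nat.one_le_two_pow
    have hpm : p ≤ m := by omega
    have hmq : m ≤ q := by omega
    have hmA : m ≤ p + 2^(n - j₀) := by omega
    have hqmA : q ≤ m + 2^(n - j₀) := by omega
    have D1 := chain_dyadic f T' c hc j₀ H n hn p m hpm hmA (hmle m hmq)
    have D2 := chain_dyadic f T' c hc j₀ H n hn m q hmq hqmA (hmle q le_rfl)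
    have hSn := hS n hn
    calc |f (y n) - f (x n)|
        ≤ |f ((q:ℝ)/2^n) - f ((m:ℝ)/2^n)| + |f ((m:ℝ)/2^n) - f ((p:ℝ)/2^n)| := by
          rw [hx, hy]
          exact abs_sub_le _ _ _
      _ ≤ 2 * S := by linarith
  -- limits
  have hhalf : Filter.Tendsto (fun n : ℕ => (1:ℝ)/2^n) Filter.atTop (nhds 0) := by
    simp only [one_div, ← inv_pow]
    exact tendsto_pow_atTop_nhds_zero_of_lt_one (by norm_num) (by norm_num)
  have hseq : ∀ (t : ℝ), 0 ≤ t →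
      Filter.Tendsto (fun n : ℕ => ((⌈2^n * t⌉₊ : ℕ):ℝ)/2^n) Filter.atTop (nhds t) := by
    intro t ht
    have hle : ∀ n : ℕ, t ≤ ((⌈2^n * t⌉₊ : ℕ):ℝ)/2^n := by
      intro n
      have hpow : (0:ℝ) < 2^n := by positivity
      rw [le_div_iff₀ hpow]
      calc t * 2^n = 2^n * t := by ring
        _ ≤ _ := Nat.le_ceil _
    have hge : ∀ n : ℕ, ((⌈2^n * t⌉₊ : ℕ):ℝ)/2^n ≤ t + 1/2^n := by
      intro n
      have hpow : (0:ℝ) < 2^n := by positivity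
      rw [div_le_iff₀ hpow]
      have := Nat.ceil_lt_add_one (show (0:ℝ) ≤ 2^n * t by positivity)
      have he : (t + 1/2^n) * 2^n = 2^n * t + 1 := by field_simp
      rw [he]
      linarith
    have h2 : Filter.Tendsto (fun n : ℕ => t + 1/2^n) Filter.atTop (nhds t) := by
      have := Filter.Tendsto.const_add t hhalf
      simpa using this
    exact tendsto_of_tendsto_of_tendsto_of_le_of_le tendsto_const_nhds h2 hle hge
  have hx0 : ∀ n, 0 ≤ x n := fun n => by positivity
  have hy0 : ∀ n, 0 ≤ y n := fun n => by positivity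
  have hcx : Filter.Tendsto (fun n => f (x n)) Filter.atTop (nhds (f t₁)) := by
    have h1 : Filter.Tendsto x Filter.atTop (nhds t₁) := hseq t₁ ht₁0
    have h2 : Filter.Tendsto x Filter.atTop (nhdsWithin t₁ (Set.Ici 0)) := by
      rw [tendsto_nhdsWithin_iff]
      exact ⟨h1, Filter.Eventually.of_forall hx0⟩
    exact (hf t₁ ht₁0).tendsto.comp h2
  have hcy : Filter.Tendsto (fun n => f (y n)) Filter.atTop (nhds (f t₂)) := by
    have h1 : Filter.Tendsto y Filter.atTop (nhds t₂) := hseq t₂ ht₂0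
    have h2 : Filter.Tendsto y Filter.atTop (nhdsWithin t₂ (Set.Ici 0)) := by
      rw [tendsto_nhdsWithin_iff]
      exact ⟨h1, Filter.Eventually.of_forall hy0⟩
    exact (hf t₂ ht₂0).tendsto.comp h2
  have habs : Filter.Tendsto (fun n => |f (y n) - f (x n)|) Filter.atTop
      (nhds (|f t₂ - f t₁|)) := ((hcy.sub hcx).abs)
  refine le_of_tendsto habs ?_
  filter_upwards [Filter.eventually_ge_atTop j₀] with n hn
  exact key n hn

lemma geom_partial_le {ρ : ℝ} (h0 : 0 ≤ ρ) (h1 : ρ < 1) (n : ℕ) :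
    ∑ i ∈ Finset.range n, ρ^i ≤ (1-ρ)⁻¹ := by
  have hne : ρ ≠ 1 := h1.ne
  rw [geom_sum_eq hne]
  rw [div_le_iff_of_neg (by linarith : ρ - 1 < 0)]
  have hpow : 0 ≤ ρ^n := pow_nonneg h0 n
  have h2 : (0:ℝ) < 1 - ρ := by linarith
  have : (1-ρ)⁻¹ * (ρ - 1) = -1 := by field_simp; ring
  rw [this]
  linarith

lemma inv_sq_partial_le : ∀ N : ℕ, ∑ m ∈ Finset.range N, ((m:ℝ)^2)⁻¹ ≤ 2 := by
  have aux : ∀ N : ℕ, 1 ≤ N → ∑ m ∈ Finset.range (N+1), ((m:ℝ)^2)⁻¹ ≤ 2 - 1/N := by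
    intro N hN
    induction N, hN using Nat.le_induction with
    | base => norm_num [Finset.sum_range_succ]
    | succ N hN ih =>
      rw [Finset.sum_range_succ]
      have hN' : (0:ℝ) < N := by exact_mod_cast hN
      have step : (((N+1:ℕ):ℝ)^2)⁻¹ ≤ 1/N - 1/((N:ℝ)+1) := by
        push_cast
        rw [div_sub_div _ _ (ne_of_gt hN') (by linarith : ((N:ℝ)+1) ≠ 0)]
        rw [inv_eq_one_div]
        rw [div_le_div_iff₀ (by positivity) (by positivity)]
        ring_nf
        nlinarith
      push_cast at step ⊢
      linarith
  intro N
  match N with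
  | 0 => simp
  | 1 => norm_num
  | (N+2) =>
    have := aux (N+1) (by omega)
    have hN' : (0:ℝ) < (N:ℝ)+1 := by positivity
    have : (1:ℝ)/((N:ℕ)+1:ℝ) ≥ 0 := by positivity
    have h2 := aux (N+1) (by omega)
    push_cast at h2 ⊢
    linarith

lemma sum_inv_sq_le (s : Finset ℕ) : ∑ m ∈ s, ((m:ℝ)^2)⁻¹ ≤ 2 := by
  obtain ⟨N, hN⟩ := s.exists_nat_subset_range
  calc ∑ m ∈ s, ((m:ℝ)^2)⁻¹ ≤ ∑ m ∈ Finset.range N, ((m:ℝ)^2)⁻¹ :=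
        Finset.sum_le_sum_of_subset_of_nonneg hN (fun i _ _ => by positivity)
    _ ≤ 2 := inv_sq_partial_le N

lemma per_m {Ω : Type*} [MeasurableSpace Ω] (P : Measure Ω)
    (β : ℝ → Ω → ℝ) (hmeas : ∀ t : ℝ, Measurable (β t))
    (hgauss : ∀ s t : ℝ, 0 ≤ s → s ≤ t →
      Measure.map (fun ω => β t ω - β s ω) P
        = ProbabilityTheory.gaussianReal 0 (Real.toNNReal (t - s)))
    (T L : ℝ) (hT : 0 < T) (hL : 0 < L) (m : ℕ) (hm : 1 ≤ m) :
    P {ω | ∃ j, Nat.log 2 (m^6) ≤ j ∧ ∃ k : ℕ,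
        ((k:ℝ)+1)/2^j ≤ T+1 ∧
        (L/(40*m)) * (9/10:ℝ)^(j - Nat.log 2 (m^6))
          < |β (((k:ℝ)+1)/2^j) ω - β ((k:ℝ)/2^j) ω|}
      ≤ ENNReal.ofReal ((3276800000*(T+2)/L^4) * ((m:ℝ)^2)⁻¹) := by
  set j₀ := Nat.log 2 (m^6) with hj₀
  have hmpos : (0:ℝ) < m := by exact_mod_cast hm
  set a := L/(40*(m:ℝ)) with ha
  have hapos : 0 < a := by rw [ha]; positivity
  set c : ℕ → ℝ := fun j => a * (9/10:ℝ)^(j - j₀) with hcdef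
  have hcpos : ∀ j, 0 < c j := fun j => by
    rw [hcdef]; positivity
  set M := ⌈T+1⌉₊ with hM
  have hMge : T+1 ≤ (M:ℝ) := Nat.le_ceil _
  have hMle : (M:ℝ) ≤ T+2 := by
    have := Nat.ceil_lt_add_one (show (0:ℝ) ≤ T+1 by linarith)
    linarith
  set E : ℕ → ℕ → Set Ω := fun j k =>
    {ω | j₀ ≤ j ∧ ((k:ℝ)+1)/2^j ≤ T+1 ∧
      c j ≤ |β (((k:ℝ)+1)/2^j) ω - β ((k:ℝ)/2^j) ω|} with hE
  have hsub : {ω | ∃ j, j₀ ≤ j ∧ ∃ k : ℕ,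
        ((k:ℝ)+1)/2^j ≤ T+1 ∧
        c j < |β (((k:ℝ)+1)/2^j) ω - β ((k:ℝ)/2^j) ω|}
      ⊆ ⋃ j, ⋃ k, E j k := by
    intro ω hω
    obtain ⟨j, hj, k, hk, hlt⟩ := hω
    exact Set.mem_iUnion.mpr ⟨j, Set.mem_iUnion.mpr ⟨k, hj, hk, hlt.le⟩⟩
  -- per (j,k) bound
  set x : ℕ → ℝ≥0∞ := fun j => ENNReal.ofReal (128*(((2:ℝ)^j)⁻¹)^2/(c j)^4) with hxdef
  have hjk : ∀ j k : ℕ, P (E j k) ≤ if j₀ ≤ j ∧ k < M * 2^j then x j else 0 := by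
    intro j k
    by_cases hcond : j₀ ≤ j ∧ k < M * 2^j
    · rw [if_pos hcond]
      have hpow : (0:ℝ) < 2^j := by positivity
      have hs0 : (0:ℝ) ≤ (k:ℝ)/2^j := by positivity
      have hst : (k:ℝ)/2^j ≤ ((k:ℝ)+1)/2^j := by
        apply div_le_div_of_nonneg_right _ hpow.le
        linarith
      have htail := incr_tail P β hmeas hgauss hs0 hst (hcpos j)
      have hdiff : ((k:ℝ)+1)/2^j - (k:ℝ)/2^j = ((2:ℝ)^j)⁻¹ := by
        field_simp
        ring
      calc P (E j k) ≤ P {ω | c j ≤ |β (((k:ℝ)+1)/2^j) ω - β ((k:ℝ)/2^j) ω|} :=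
            measure_mono (fun ω hω => hω.2.2)
        _ ≤ ENNReal.ofReal (128*(((k:ℝ)+1)/2^j - (k:ℝ)/2^j)^2/(c j)^4) := htail
        _ = x j := by rw [hdiff]
    · rw [if_neg hcond]
      have : E j k = ∅ := by
        rcases not_and_or.mp hcond with h | h
        · ext ω; simp only [hE, Set.mem_setOf_eq, Set.mem_empty_iff_false, iff_false]
          intro hmem; exact h hmem.1
        · ext ω; simp only [hE, Set.mem_setOf_eq, Set.mem_empty_iff_false, iff_false]
          intro hmem
          have hk : M * 2^j ≤ k := Nat.le_of_not_lt h
          have hge : ((M * 2^j : ℕ):ℝ) ≤ (k:ℝ) := by exact_mod_cast hk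
          push_cast at hge
          have hpow : (0:ℝ) < 2^j := by positivity
          have h2 : ((k:ℝ)+1)/2^j ≤ T+1 := hmem.2.1
          rw [div_le_iff₀ hpow] at h2
          nlinarith
      rw [this]
      simp
  set hfun : ℕ → ℝ≥0∞ := fun j => if j₀ ≤ j then ((M * 2^j : ℕ) : ℝ≥0∞) * x j else 0
    with hfundef
  have inner : ∀ j, ∑' k, P (E j k) ≤ hfun j := by
    intro j
    by_cases hj : j₀ ≤ j
    · rw [hfundef]
      simp only [if_pos hj]
      calc ∑' k, P (E j k)
          ≤ ∑' k, (if j₀ ≤ j ∧ k < M * 2^j then x j else 0) :=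
            ENNReal.tsum_le_tsum (hjk j)
        _ = ∑ k ∈ Finset.range (M * 2^j), (if j₀ ≤ j ∧ k < M * 2^j then x j else 0) := by
            refine tsum_eq_sum ?_
            intro k hk
            rw [if_neg]
            rintro ⟨-, hk'⟩
            exact hk (Finset.mem_range.mpr hk')
        _ = ∑ k ∈ Finset.range (M * 2^j), x j := by
            refine Finset.sum_congr rfl ?_
            intro k hk
            rw [if_pos ⟨hj, Finset.mem_range.mp hk⟩]
        _ = ((M * 2^j : ℕ) : ℝ≥0∞) * x j := by
            rw [Finset.sum_const, Finset.card_range, nsmul_eq_mul]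
    · rw [hfundef]
      simp only [if_neg hj]
      have : ∀ k, P (E j k) = 0 := by
        intro k
        have := hjk j k
        rw [if_neg (fun hcon => hj hcon.1)] at this
        exact le_antisymm this zero_le
      simp [this]
  set r : ℝ := (2:ℝ)⁻¹ * ((9/10:ℝ)⁻¹)^4 with hrdef
  have hr0 : (0:ℝ) ≤ r := by rw [hrdef]; positivity
  have hr1 : r < 1 := by rw [hrdef]; norm_num
  set base : ℝ := 128*(T+2)*((2:ℝ)^j₀)⁻¹*(a⁻¹)^4 with hbasedef
  have hbase0 : 0 ≤ base := by
    rw [hbasedef]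
    have : (0:ℝ) ≤ T + 2 := by linarith
    positivity
  have hterm : ∀ i : ℕ, hfun (j₀ + i) ≤ ENNReal.ofReal (base * r^i) := by
    intro i
    rw [hfundef]
    simp only [if_pos (Nat.le_add_right j₀ i)]
    have hcval : c (j₀ + i) = a * (9/10:ℝ)^i := by
      rw [hcdef]
      simp [Nat.add_sub_cancel_left]
    have hru : r^i = ((2:ℝ)^i)⁻¹ * ((((9/10:ℝ)^i)^4)⁻¹) := by
      rw [hrdef]
      rw [mul_pow, inv_pow, ← pow_mul, inv_pow, ← pow_mul, mul_comm 4 i, pow_mul]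
    have h9 : ((9/10:ℝ))^i ≠ 0 := by positivity
    have ha' : a ≠ 0 := hapos.ne'
    have h2i : ((2:ℝ)^i) ≠ 0 := by positivity
    have h2j0 : ((2:ℝ)^j₀) ≠ 0 := by positivity
    have EQ : (2:ℝ)^(j₀+i) * (128*(((2:ℝ)^(j₀+i))⁻¹)^2/(a*(9/10:ℝ)^i)^4)
        = 128*((2:ℝ)^j₀)⁻¹*(a⁻¹)^4 * (((2:ℝ)^i)⁻¹ * ((((9/10:ℝ)^i)^4)⁻¹)) := by
      rw [pow_add]
      field_simp
    have hcast : ((M * 2^(j₀+i) : ℕ) : ℝ≥0∞) = ENNReal.ofReal ((M:ℝ) * 2^(j₀+i)) := by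
      rw [← ENNReal.ofReal_natCast]
      congr 1
      push_cast
      ring
    rw [hcast, hxdef]
    simp only []
    rw [hcval, ← ENNReal.ofReal_mul (by positivity : (0:ℝ) ≤ (M:ℝ) * 2^(j₀+i))]
    refine ENNReal.ofReal_le_ofReal ?_
    rw [hru]
    have hMT : (M:ℝ) ≤ T + 2 := hMle
    have hrest : (0:ℝ) ≤ (2:ℝ)^(j₀+i) * (128*(((2:ℝ)^(j₀+i))⁻¹)^2/(a*(9/10:ℝ)^i)^4) := by
      positivity
    calc (M:ℝ) * 2^(j₀+i) * (128*(((2:ℝ)^(j₀+i))⁻¹)^2/(a*(9/10:ℝ)^i)^4)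
        = (M:ℝ) * ((2:ℝ)^(j₀+i) * (128*(((2:ℝ)^(j₀+i))⁻¹)^2/(a*(9/10:ℝ)^i)^4)) := by ring
      _ ≤ (T+2) * ((2:ℝ)^(j₀+i) * (128*(((2:ℝ)^(j₀+i))⁻¹)^2/(a*(9/10:ℝ)^i)^4)) :=
          mul_le_mul_of_nonneg_right hMT hrest
      _ = base * (((2:ℝ)^i)⁻¹ * ((((9/10:ℝ)^i)^4)⁻¹)) := by
          rw [EQ, hbasedef]; ring
  have hshift : ∑' j, hfun j = ∑' i, hfun (j₀ + i) := by
    refine (Function.Injective.tsum_eq (f := hfun) (g := fun i => j₀ + i) ?_ ?_).symm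
    · exact add_right_injective j₀
    · intro j hj
      by_contra hmem
      apply hj
      rw [hfundef]
      have : ¬ j₀ ≤ j := by
        intro hle
        exact hmem ⟨j - j₀, show j₀ + (j - j₀) = j by omega⟩
      simp [this]
  have hsum_geom : ∑' i : ℕ, ENNReal.ofReal (base * r^i)
      = ENNReal.ofReal (base * (1-r)⁻¹) := by
    rw [← ENNReal.ofReal_tsum_of_nonneg (fun i => by positivity)
      ((summable_geometric_of_lt_one hr0 hr1).mul_left base)]
    congr 1
    rw [tsum_mul_left, tsum_geometric_of_lt_one hr0 hr1]
  -- final numeric bound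
  have hm6 : ((m:ℝ)^6) ≤ 2 * (2:ℝ)^j₀ := by
    have h1 : m^6 < 2^(j₀+1) := Nat.lt_pow_succ_log_self (by norm_num) (m^6)
    have h2 : ((m:ℝ))^6 < (2:ℝ)^(j₀+1) := by exact_mod_cast h1
    have h3 : ((2:ℝ))^(j₀+1) = 2 * (2:ℝ)^j₀ := by rw [pow_succ]; ring
    linarith
  have hj0inv : ((2:ℝ)^j₀)⁻¹ ≤ 2 * ((m:ℝ)^6)⁻¹ := by
    have hmp : (0:ℝ) < (m:ℝ)^6 := by positivity
    have heq : 2 * ((m:ℝ)^6)⁻¹ = ((m:ℝ)^6/2)⁻¹ := by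
      rw [inv_div]
      ring
    rw [heq]
    apply inv_anti₀ (by positivity)
    linarith
  have hfinal : base * (1-r)⁻¹ ≤ 3276800000*(T+2)/L^4 * ((m:ℝ)^2)⁻¹ := by
    have hr5 : (1-r)⁻¹ ≤ 5 := by rw [hrdef]; norm_num
    have h5 : base * (1-r)⁻¹ ≤ base * 5 := mul_le_mul_of_nonneg_left hr5 hbase0
    refine h5.trans ?_
    have hT2 : (0:ℝ) ≤ T + 2 := by linarith
    have hstep : base * 5 ≤ 128*(T+2)*(2 * ((m:ℝ)^6)⁻¹)*(a⁻¹)^4 * 5 := by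
      rw [hbasedef]
      have hia : (0:ℝ) ≤ (a⁻¹)^4 := by positivity
      nlinarith [mul_le_mul_of_nonneg_left hj0inv hT2, hia,
        mul_le_mul_of_nonneg_right (mul_le_mul_of_nonneg_left hj0inv (by linarith : (0:ℝ) ≤ 128*(T+2))) hia]
    refine hstep.trans ?_
    have hainv : a⁻¹ = 40*(m:ℝ)/L := by
      rw [ha, inv_div]
    have hmne : (m:ℝ) ≠ 0 := hmpos.ne'
    have hLne : L ≠ 0 := hL.ne'
    have heq : 128*(T+2)*(2*((m:ℝ)^6)⁻¹)*((40*(m:ℝ)/L)^4) * 5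
        = 3276800000*(T+2)/L^4*((m:ℝ)^2)⁻¹ := by
      field_simp
      ring
    rw [hainv, heq]
  calc P {ω | ∃ j, j₀ ≤ j ∧ ∃ k : ℕ,
        ((k:ℝ)+1)/2^j ≤ T+1 ∧
        c j < |β (((k:ℝ)+1)/2^j) ω - β ((k:ℝ)/2^j) ω|}
      ≤ P (⋃ j, ⋃ k, E j k) := measure_mono hsub
    _ ≤ ∑' j, P (⋃ k, E j k) := measure_iUnion_le _
    _ ≤ ∑' j, ∑' k, P (E j k) := ENNReal.tsum_le_tsum (fun j => measure_iUnion_le _)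
    _ ≤ ∑' j, hfun j := ENNReal.tsum_le_tsum inner
    _ = ∑' i, hfun (j₀ + i) := hshift
    _ ≤ ∑' i, ENNReal.ofReal (base * r^i) := ENNReal.tsum_le_tsum hterm
    _ = ENNReal.ofReal (base * (1-r)⁻¹) := hsum_geom
    _ ≤ ENNReal.ofReal ((3276800000*(T+2)/L^4) * ((m:ℝ)^2)⁻¹) :=
        ENNReal.ofReal_le_ofReal hfinal

/-- A standard one-dimensional Brownian motion: `β 0 = 0` a.s., a.e. continuous paths on
`[0,∞)`, independent increments over any nonnegative monotone sequence of times, and Gaussian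
increments `β t − β s ∼ N(0, t − s)` for `0 ≤ s ≤ t`. -/
def IsBrownianMotion {Ω : Type*} [MeasurableSpace Ω] (P : Measure Ω)
    (β : ℝ → Ω → ℝ) : Prop :=
  (∀ t : ℝ, Measurable (β t)) ∧
  (∀ᵐ ω ∂P, β 0 ω = 0) ∧
  (∀ᵐ ω ∂P, ContinuousOn (fun t => β t ω) (Set.Ici 0)) ∧
  (∀ (n : ℕ) (t : Fin (n + 1) → ℝ), (∀ i, 0 ≤ t i) → Monotone t →
    ProbabilityTheory.iIndepFun
      (fun (i : Fin n) (ω : Ω) => β (t i.succ) ω - β (t i.castSucc) ω) P) ∧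
  (∀ s t : ℝ, 0 ≤ s → s ≤ t →
    Measure.map (fun ω => β t ω - β s ω) P
      = ProbabilityTheory.gaussianReal 0 (Real.toNNReal (t - s)))

/-- For a standard Brownian motion `β` and `T > 0`, there is a constant `C`
depending only on `T` such that for every `L > 0`,
`P(∃ m ≥ 1, sup_{t₁,t₂ ∈ [0,T], |t₁−t₂| ≤ m⁻⁶} m·|β_{t₁} − β_{t₂}| > L) ≤ C / L⁴`. -/
theorem stmt_6 {Ω : Type*} [MeasurableSpace Ω] (P : Measure Ω) [IsProbabilityMeasure P]
    (β : ℝ → Ω → ℝ) (hβ : IsBrownianMotion P β) (T : ℝ) (hT : 0 < T) :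
    ∃ C : ℝ, 0 < C ∧ ∀ L : ℝ, 0 < L →
      P {ω | ∃ m : ℕ, 1 ≤ m ∧ ∃ t₁ ∈ Set.Icc (0:ℝ) T, ∃ t₂ ∈ Set.Icc (0:ℝ) T,
            |t₁ - t₂| ≤ (((m : ℝ)) ^ 6)⁻¹ ∧ L < (m : ℝ) * |β t₁ ω - β t₂ ω|}
        ≤ ENNReal.ofReal (C / L ^ 4) := by
  obtain ⟨hmeas, -, hcont, -, hgauss⟩ := hβ
  refine ⟨6553600000*(T+2), by nlinarith, ?_⟩
  intro L hL
  set B : ℕ → Set Ω := fun m => {ω | 1 ≤ m ∧ ∃ j, Nat.log 2 (m^6) ≤ j ∧ ∃ k : ℕ,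
      ((k:ℝ)+1)/2^j ≤ T+1 ∧
      (L/(40*(m:ℝ))) * (9/10:ℝ)^(j - Nat.log 2 (m^6))
        < |β (((k:ℝ)+1)/2^j) ω - β ((k:ℝ)/2^j) ω|} with hB
  set G : Set Ω := {ω | ContinuousOn (fun t => β t ω) (Set.Ici 0)} with hG
  have hGc : P Gᶜ = 0 := by
    rw [hG, Set.compl_setOf]
    exact ae_iff.mp hcont
  -- inclusion
  have hincl : {ω | ∃ m : ℕ, 1 ≤ m ∧ ∃ t₁ ∈ Set.Icc (0:ℝ) T, ∃ t₂ ∈ Set.Icc (0:ℝ) T,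
        |t₁ - t₂| ≤ (((m : ℝ)) ^ 6)⁻¹ ∧ L < (m : ℝ) * |β t₁ ω - β t₂ ω|}
      ⊆ (⋃ m, B m) ∪ Gᶜ := by
    intro ω hω
    obtain ⟨m, hm, t₁, ht₁, t₂, ht₂, hgap, hlt⟩ := hω
    by_cases hωG : ω ∈ G
    · left
      refine Set.mem_iUnion.mpr ⟨m, hm, ?_⟩
      by_contra hno
      push_neg at hno
      set j₀ := Nat.log 2 (m^6) with hj₀
      have hmpos : (0:ℝ) < m := by exact_mod_cast hm
      set a := L/(40*(m:ℝ)) with ha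
      have hapos : 0 < a := by rw [ha]; positivity
      set c : ℕ → ℝ := fun j => a * (9/10:ℝ)^(j - j₀) with hcdef
      have hc0 : ∀ j, 0 ≤ c j := fun j => by rw [hcdef]; positivity
      have hS : ∀ n, j₀ ≤ n → 2 * ∑ j ∈ Finset.Icc j₀ n, c j ≤ L/(2*(m:ℝ)) := by
        intro n hn
        have hsum : ∑ j ∈ Finset.Icc j₀ n, c j
            = ∑ i ∈ Finset.range (n + 1 - j₀), c (j₀ + i) := by
          rw [← Finset.Ico_add_one_right_eq_Icc, Finset.sum_Ico_eq_sum_range]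
        have hval : ∀ i : ℕ, c (j₀ + i) = a * (9/10:ℝ)^i := by
          intro i
          rw [hcdef]
          simp [Nat.add_sub_cancel_left]
        rw [hsum]
        have : ∑ i ∈ Finset.range (n + 1 - j₀), c (j₀ + i)
            = a * ∑ i ∈ Finset.range (n + 1 - j₀), (9/10:ℝ)^i := by
          rw [Finset.mul_sum]
          exact Finset.sum_congr rfl fun i _ => hval i
        rw [this]
        have hgeo := geom_partial_le (by norm_num : (0:ℝ) ≤ 9/10) (by norm_num) (n + 1 - j₀)
        have h10 : ((1:ℝ) - 9/10)⁻¹ = 10 := by norm_num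
        rw [h10] at hgeo
        have h1 : a * ∑ i ∈ Finset.range (n + 1 - j₀), (9/10:ℝ)^i ≤ a * 10 :=
          mul_le_mul_of_nonneg_left hgeo hapos.le
        have hmne : (m:ℝ) ≠ 0 := hmpos.ne'
        have h3 : 2*(a*10) = L/(2*(m:ℝ)) := by rw [ha]; field_simp; ring
        linarith
      have H : ∀ j, j₀ ≤ j → ∀ k : ℕ, ((k:ℝ)+1)/2^j ≤ T+1 →
          |(fun t => β t ω) (((k:ℝ)+1)/2^j) - (fun t => β t ω) ((k:ℝ)/2^j)| ≤ c j := by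
        intro j hj k hk
        exact hno j hj k hk
      have hgap' : |t₁ - t₂| ≤ 1/2^j₀ := by
        refine hgap.trans ?_
        have h1 : (2:ℕ)^j₀ ≤ m^6 := Nat.pow_log_le_self 2 (by positivity)
        have h2 : ((2:ℝ))^j₀ ≤ (m:ℝ)^6 := by exact_mod_cast h1
        rw [one_div]
        exact inv_anti₀ (by positivity) h2
      have hfin : |β t₁ ω - β t₂ ω| ≤ L/(m:ℝ) := by
        have h2S : 2 * (L/(2*(m:ℝ))) = L/(m:ℝ) := by field_simp
        rcases le_total t₁ t₂ with h12 | h12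
        · have := chain_real_aux (fun t => β t ω) hωG T (T+1) (L/(2*(m:ℝ)))
            le_rfl c hc0 j₀ hS H ht₁ ht₂ h12 (by rw [abs_sub_comm] at hgap'; rw [abs_of_nonneg (by linarith)] at hgap'; linarith [hgap'])
          rw [abs_sub_comm]
          rw [h2S] at this
          exact this
        · have := chain_real_aux (fun t => β t ω) hωG T (T+1) (L/(2*(m:ℝ)))
            le_rfl c hc0 j₀ hS H ht₂ ht₁ h12 (by rw [abs_of_nonneg (by linarith)] at hgap'; linarith [hgap'])
          rw [h2S] at this
          exact this
      have : (m:ℝ) * |β t₁ ω - β t₂ ω| ≤ L := by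
        have := mul_le_mul_of_nonneg_left hfin hmpos.le
        have heq : (m:ℝ) * (L/(m:ℝ)) = L := by field_simp
        linarith [heq ▸ this]
      linarith
    · right; exact hωG
  have hBbound : ∀ m : ℕ, P (B m)
      ≤ ENNReal.ofReal ((3276800000*(T+2)/L^4) * ((m:ℝ)^2)⁻¹) := by
    intro m
    rcases Nat.eq_zero_or_pos m with hm0 | hm1
    · subst hm0
      have : B 0 = ∅ := by
        rw [hB]
        ext ω; simp
      rw [this]
      simp
    · refine le_trans (measure_mono ?_) (per_m P β hmeas hgauss T L hT hL m hm1)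
      intro ω hω
      exact hω.2
  calc P {ω | ∃ m : ℕ, 1 ≤ m ∧ ∃ t₁ ∈ Set.Icc (0:ℝ) T, ∃ t₂ ∈ Set.Icc (0:ℝ) T,
        |t₁ - t₂| ≤ (((m : ℝ)) ^ 6)⁻¹ ∧ L < (m : ℝ) * |β t₁ ω - β t₂ ω|}
      ≤ P ((⋃ m, B m) ∪ Gᶜ) := measure_mono hincl
    _ ≤ P (⋃ m, B m) + P Gᶜ := measure_union_le _ _
    _ = P (⋃ m, B m) := by rw [hGc, add_zero]
    _ ≤ ∑' m, P (B m) := measure_iUnion_le _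
    _ ≤ ∑' m : ℕ, ENNReal.ofReal ((3276800000*(T+2)/L^4) * ((m:ℝ)^2)⁻¹) :=
        ENNReal.tsum_le_tsum hBbound
    _ ≤ ENNReal.ofReal (6553600000*(T+2) / L ^ 4) := by
        rw [ENNReal.tsum_eq_iSup_sum]
        refine iSup_le fun s => ?_
        have hK : (0:ℝ) ≤ 3276800000*(T+2)/L^4 := by positivity
        rw [← ENNReal.ofReal_sum_of_nonneg (fun m _ => by positivity)]
        refine ENNReal.ofReal_le_ofReal ?_
        rw [← Finset.mul_sum]
        have := sum_inv_sq_le s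
        have h2 : 3276800000*(T+2)/L^4 * (∑ m ∈ s, ((m:ℝ)^2)⁻¹)
            ≤ 3276800000*(T+2)/L^4 * 2 := mul_le_mul_of_nonneg_left this hK
        refine h2.trans ?_
        rw [div_mul_eq_mul_div]
        apply div_le_div_of_nonneg_right ?_ (by positivity)
        · nlinarith
end
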